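/- Let Z = [0,g_1] + ... + [0,g_m] be the zonotope generated by g_1,...,g_m ∈ ℝ^d with center c = (g_1 + ... + g_m)/2. For every v ∈ int(Z), there exists a (d−1)-dimensional parallelepiped Q which is a translate of a parallelepiped generated by a subset of {g_1,...,g_m} such that v is contained in the interior of the parallelepiped P := conv(Q, 2c − Q), and P ⊆ Z. Moreover, if g_1,...,g_m ∈ ℤ^d, then P is a lattice parallelepiped. -/

import Mathlib

open Pointwise

open Set

/-- A point of `ℝ^d` all of whose coordinates are integers. -/
def IsLatticePoint {d : ℕ} (x : Fin d → ℝ) : Prop := ∀ i, ∃ z : ℤ, x i = (z : ℝ)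

lemma mem_seg_zero {E : Type*} [AddCommGroup E] [Module ℝ E] (y x : E) :
    x ∈ segment ℝ (0 : E) y ↔ ∃ μ ∈ Set.Icc (0:ℝ) 1, x = μ • y := by
  rw [segment_eq_image]
  constructor
  · rintro ⟨θ, hθ, rfl⟩; exact ⟨θ, hθ, by simp⟩
  · rintro ⟨μ, hμ, rfl⟩; exact ⟨μ, hμ, by simp⟩

lemma mem_sum_seg {ι E : Type*} [AddCommGroup E] [Module ℝ E] (s : Finset ι) (f : ι → E) (x : E) :
    x ∈ ∑ j ∈ s, segment ℝ (0 : E) (f j) ↔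
      ∃ θ : ι → ℝ, (∀ j ∈ s, θ j ∈ Set.Icc (0:ℝ) 1) ∧ x = ∑ j ∈ s, θ j • f j := by
  rw [Set.mem_finset_sum]
  constructor
  · rintro ⟨gg, hgg, rfl⟩
    have h : ∀ i : ι, ∃ t : ℝ, i ∈ s → (t ∈ Set.Icc (0:ℝ) 1 ∧ gg i = t • f i) := by
      intro i
      by_cases hi : i ∈ s
      · obtain ⟨μ, hμ, hμ2⟩ := (mem_seg_zero (f i) (gg i)).1 (hgg hi)
        exact ⟨μ, fun _ => ⟨hμ, hμ2⟩⟩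
      · exact ⟨0, fun h => absurd h hi⟩
    choose θ hθ using h
    refine ⟨θ, fun j hj => (hθ j hj).1, Finset.sum_congr rfl fun j hj => (hθ j hj).2⟩
  · rintro ⟨θ, hθ, rfl⟩
    exact ⟨fun j => θ j • f j, fun {i} hi => (mem_seg_zero _ _).2 ⟨θ i, hθ i hi, rfl⟩, rfl⟩

lemma convex_sum_seg {ι E : Type*} [AddCommGroup E] [Module ℝ E] (s : Finset ι) (f : ι → E) :
    Convex ℝ (∑ j ∈ s, segment ℝ (0 : E) (f j)) := by
  classical
  induction s using Finset.induction_on with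
  | empty => rw [Finset.sum_empty]; exact convex_singleton (0 : E)
  | insert j s hj ih => rw [Finset.sum_insert hj]; exact (convex_segment _ _).add ih

noncomputable def lev (x : ℝ) : ℝ := min x (1 - x)

lemma lev_pos {x : ℝ} (h : 0 < lev x) : x ∈ Set.Ioo (0:ℝ) 1 := by
  unfold lev at h
  constructor <;> [exact lt_of_lt_of_le h (min_le_left _ _);
    nlinarith [lt_of_lt_of_le h (min_le_right _ _)]]

lemma lev_le_half (x : ℝ) : lev x ≤ 1/2 := by
  unfold lev; rcases le_total x (1-x) with h | h
  · rw [min_eq_left h]; linarith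
  · rw [min_eq_right h]; linarith

lemma lev_eq_half {x : ℝ} (h : lev x = 1/2) : x = 1/2 := by
  unfold lev at h
  rcases le_total x (1-x) with h' | h' <;> [rw [min_eq_left h'] at h; rw [min_eq_right h'] at h] <;> linarith

lemma lev_lip {x y : ℝ} : lev x - |y - x| ≤ lev y := by
  have h1 := le_abs_self (y - x)
  have h2 := neg_abs_le (y - x)
  have h3 := min_le_left x (1-x)
  have h4 := min_le_right x (1-x)
  unfold lev at *
  apply le_min <;> linarith

lemma lev_vals {x l : ℝ} (h : lev x = l) : x = l ∨ x = 1 - l := by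
  unfold lev at h
  rcases le_total x (1-x) with h' | h' <;> [left; right] <;>
    [rw [min_eq_left h'] at h; rw [min_eq_right h'] at h] <;> linarith

-- hull of union with translate
lemma hull_union_vadd {E : Type*} [AddCommGroup E] [Module ℝ E] (A : Set E) (hA : Convex ℝ A)
    (w : E) : convexHull ℝ (A ∪ (w +ᵥ A)) = A + segment ℝ (0 : E) w := by
  apply le_antisymm
  · apply convexHull_min
    · rintro x (hx | hx)
      · exact ⟨x, hx, 0, left_mem_segment _ _ _, by simp⟩
      · obtain ⟨y, hy, rfl⟩ := hx
        exact ⟨y, hy, w, right_mem_segment _ _ _, by simp [add_comm]⟩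
    · exact hA.add (convex_segment _ _)
  · rintro x ⟨y, hy, u, hu, rfl⟩
    obtain ⟨μ, hμ, rfl⟩ := (mem_seg_zero w u).1 hu
    have h1 : y ∈ convexHull ℝ (A ∪ (w +ᵥ A)) := subset_convexHull _ _ (Or.inl hy)
    have h2 : w + y ∈ convexHull ℝ (A ∪ (w +ᵥ A)) := subset_convexHull _ _ (Or.inr ⟨y, hy, rfl⟩)
    have := (convex_convexHull ℝ (A ∪ (w +ᵥ A))) h1 h2 (by linarith [hμ.1, hμ.2] : (0:ℝ) ≤ 1 - μ)
      hμ.1 (by ring)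
    convert this using 1
    module

lemma pad {d m : ℕ} (g : Fin m → Fin d → ℝ) (ε : Fin m → ℝ)
    (hspan : Submodule.span ℝ (Set.range g) = ⊤) :
    ∀ (n : ℕ) (F : Finset (Fin m)),
      F.card + n = d - 1 →
      LinearIndependent ℝ (fun j : F => g j) →
      (∑ j ∈ Fᶜ, ε j • g j) ∉ Submodule.span ℝ (g '' ↑F) →
      ∃ F' : Finset (Fin m), F ⊆ F' ∧ F'.card = d - 1 ∧
        LinearIndependent ℝ (fun j : F' => g j) ∧
        (∑ j ∈ F'ᶜ, ε j • g j) ∉ Submodule.span ℝ (g '' ↑F') := by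
  intro n
  induction n with
  | zero =>
    intro F hcard hind hw
    exact ⟨F, Finset.Subset.refl F, by omega, hind, hw⟩
  | succ n ih =>
    intro F hcard hind hw
    set w : Fin d → ℝ := ∑ j ∈ Fᶜ, ε j • g j with hwdef
    have hex : ∃ k, g k ∉ Submodule.span ℝ (insert w (g '' ↑F)) := by
      by_contra h
      push_neg at h
      have hle : Submodule.span ℝ (Set.range g) ≤ Submodule.span ℝ (insert w (g '' ↑F)) := by
        rw [Submodule.span_le]
        rintro x ⟨k, rfl⟩; exact h k
      rw [hspan, top_le_iff] at hle
      have h1 : insert w (g '' ↑F) = ↑(insert w (F.image g)) := by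
        rw [Finset.coe_insert, Finset.coe_image]
      have h3 : (insert w (F.image g)).card ≤ F.card + 1 :=
        le_trans (Finset.card_insert_le _ _) (by
          have := Finset.card_image_le (s := F) (f := g); omega)
      have h2 : Module.finrank ℝ (Submodule.span ℝ (insert w (g '' ↑F))) ≤ F.card + 1 := by
        rw [h1]; exact le_trans (finrank_span_finset_le_card (R := ℝ) _) h3
      rw [hle] at h2
      have h4 : Module.finrank ℝ (⊤ : Submodule ℝ (Fin d → ℝ)) = d := by
        rw [finrank_top]; simp [Module.finrank_pi]
      omega
    obtain ⟨k, hkm⟩ := hex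
    have hk : k ∉ F := by
      intro hk
      exact hkm (Submodule.subset_span (Set.mem_insert_of_mem _ ⟨k, hk, rfl⟩))
    have hknotspan : g k ∉ Submodule.span ℝ (g '' ↑F) := fun h =>
      hkm (Submodule.span_mono (Set.subset_insert _ _) h)
    have hcoe : ((insert k F : Finset (Fin m)) : Set (Fin m)) = insert k (↑F : Set (Fin m)) :=
      Finset.coe_insert _ _
    have key : LinearIndependent ℝ (fun j : ↥(insert k (↑F : Set (Fin m))) => g j) := (linearIndepOn_insert (s := (↑F : Set (Fin m))) (a := k) (f := g)
      (fun h => hk h)).2 ⟨hind, hknotspan⟩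
    have hind' : LinearIndependent ℝ (fun j : (insert k F : Finset (Fin m)) => g j) := by
      rw [show ((fun j : (insert k F : Finset (Fin m)) => g (j : Fin m))) =
          (fun j : ↥(insert k (↑F : Set (Fin m))) => g (j : Fin m)) ∘
            (fun j : (insert k F : Finset (Fin m)) => (⟨(j : Fin m), hcoe ▸ j.2⟩ : ↥(insert k (↑F : Set (Fin m))))) from rfl]
      apply key.comp
      intro x y hxy
      simp only [Subtype.mk.injEq] at hxy
      exact Subtype.ext hxy
    have hsum' : ∑ j ∈ (insert k F)ᶜ, ε j • g j = w - ε k • g k := by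
      rw [Finset.compl_insert]
      have hkc : k ∈ Fᶜ := Finset.mem_compl.2 hk
      have := Finset.add_sum_erase Fᶜ (fun j => ε j • g j) hkc
      rw [hwdef, ← this]; abel
    have hw' : ∑ j ∈ (insert k F)ᶜ, ε j • g j ∉
        Submodule.span ℝ (g '' ↑(insert k F : Finset (Fin m))) := by
      rw [hsum', Finset.coe_insert, Set.image_insert_eq]
      intro hmem
      obtain ⟨a, z, hz, heq⟩ := Submodule.mem_span_insert.1 hmem
      by_cases ha : a + ε k = 0
      · apply hw
        have : w = z := by
          have h5 : w = a • g k + z + ε k • g k := by rw [← heq]; abel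
          rw [h5]
          have : a • g k + ε k • g k = (a + ε k) • g k := (add_smul a (ε k) (g k)).symm
          rw [show a • g k + z + ε k • g k = (a • g k + ε k • g k) + z from by abel, this, ha,
            zero_smul, zero_add]
        rw [this]; exact hz
      · apply hkm
        have hwmem : w ∈ Submodule.span ℝ (insert w (g '' ↑F)) :=
          Submodule.subset_span (Set.mem_insert _ _)
        have hzmem : z ∈ Submodule.span ℝ (insert w (g '' ↑F)) :=
          Submodule.span_mono (Set.subset_insert _ _) hz
        have h5 : w - z = (a + ε k) • g k := by
          rw [add_smul]
          have h6 : w = a • g k + z + ε k • g k := by rw [← heq]; abel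
          rw [h6]; abel
        have h7 : g k = (a + ε k)⁻¹ • (w - z) := by
          rw [h5, smul_smul, inv_mul_cancel₀ ha, one_smul]
        rw [h7]
        exact Submodule.smul_mem _ _ (Submodule.sub_mem _ hwmem hzmem)
    obtain ⟨F', hsub, hc, hi, hwf⟩ := ih (insert k F)
      (by rw [Finset.card_insert_of_notMem hk]; omega) hind' hw'
    exact ⟨F', le_trans (Finset.subset_insert k F) hsub, hc, hi, hwf⟩

lemma core {d m : ℕ} (g : Fin m → Fin d → ℝ) (v : Fin d → ℝ)
    (hd : 1 ≤ d)
    (hspan : Submodule.span ℝ (Set.range g) = ⊤)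
    (hrep : ∃ θ₀ : Fin m → ℝ, (∀ j, θ₀ j ∈ Set.Ioo (0:ℝ) 1) ∧ ∑ j, θ₀ j • g j = v) :
    ∃ (S : Finset (Fin m)) (ε θ : Fin m → ℝ) (μ : ℝ),
      S.card = d - 1 ∧
      (∀ j, ε j = 1 ∨ ε j = -1) ∧
      (∀ j, θ j ∈ Set.Ioo (0:ℝ) 1) ∧ μ ∈ Set.Ioo (0:ℝ) 1 ∧
      (∀ j ∉ S, θ j = (1 - ε j)/2 + ε j * μ) ∧
      (∑ j, θ j • g j = v) ∧
      LinearIndependent ℝ (fun j : S => g j) ∧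
      (∑ j ∈ Sᶜ, ε j • g j) ∉ Submodule.span ℝ (g '' ↑S) := by
  classical
  obtain ⟨θ₀, hθ₀o, hθ₀s⟩ := hrep
  -- m positive
  have hm : 0 < m := by
    rcases Nat.eq_zero_or_pos m with rfl | h
    · exfalso
      have h1 : Set.range g = ∅ := Set.range_eq_empty g
      rw [h1, Submodule.span_empty] at hspan
      have h2 : (Pi.single (⟨0, hd⟩ : Fin d) (1:ℝ)) ∈ (⊤ : Submodule ℝ (Fin d → ℝ)) :=
        Submodule.mem_top
      rw [← hspan, Submodule.mem_bot] at h2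
      have := congrFun h2 ⟨0, hd⟩
      simp [Pi.single_apply] at this
    · exact h
  haveI : Nonempty (Fin m) := ⟨⟨0, hm⟩⟩
  have hne : (Finset.univ : Finset (Fin m)).Nonempty := Finset.univ_nonempty
  set L : (Fin m → ℝ) → ℝ := fun θ => Finset.univ.inf' hne (fun j => lev (θ j)) with hLdef
  have hlevc : ∀ j : Fin m, Continuous (fun θ : Fin m → ℝ => lev (θ j)) := by
    intro j
    have : Continuous (fun θ : Fin m → ℝ => min (θ j) (1 - θ j)) :=
      (continuous_apply j).min (continuous_const.sub (continuous_apply j))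
    exact this
  have hLcont : Continuous L := by
    rw [hLdef]
    exact Continuous.finset_inf'_apply hne (fun i _ => hlevc i)
  set K : Set (Fin m → ℝ) := {θ | (∀ j, θ j ∈ Set.Icc (0:ℝ) 1) ∧ ∑ j, θ j • g j = v} with hKdef
  have hGcont : Continuous (fun θ : Fin m → ℝ => ∑ j, θ j • g j) :=
    continuous_finset_sum _ (fun j _ => (continuous_apply j).smul continuous_const)
  have hKcomp : IsCompact K := by
    have hKeq : K = (Set.pi Set.univ (fun _ : Fin m => Set.Icc (0:ℝ) 1)) ∩
        ((fun θ : Fin m → ℝ => ∑ j, θ j • g j) ⁻¹' {v}) := by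
      ext θ
      constructor
      · rintro ⟨h1, h2⟩
        exact ⟨fun j _ => h1 j, h2⟩
      · rintro ⟨h1, h2⟩
        exact ⟨fun j => h1 j (Set.mem_univ j), h2⟩
    rw [hKeq]
    exact (isCompact_univ_pi (fun _ => isCompact_Icc)).inter_right
      (isClosed_singleton.preimage hGcont)
  have hθ₀K : θ₀ ∈ K := ⟨fun j => ⟨(hθ₀o j).1.le, (hθ₀o j).2.le⟩, hθ₀s⟩
  have hLθ₀ : 0 < L θ₀ := by
    rw [hLdef]
    exact (Finset.lt_inf'_iff hne).2 fun j _ =>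
      lt_min (hθ₀o j).1 (by linarith [(hθ₀o j).2])
  obtain ⟨θ₁, hθ₁K, hmax⟩ := hKcomp.exists_isMaxOn ⟨θ₀, hθ₀K⟩ hLcont.continuousOn
  set l := L θ₁ with hldef
  have hlpos : 0 < l := lt_of_lt_of_le hLθ₀ (hmax hθ₀K)
  have hlhalf : l ≤ 1/2 := by
    rw [hldef, hLdef]
    exact le_trans (Finset.inf'_le _ (Finset.mem_univ ⟨0, hm⟩)) (lev_le_half _)
  -- secondary maximization
  set Msize : Set ℕ := {n | ∃ θ ∈ K, L θ = l ∧
    (Finset.univ.filter (fun j => lev (θ j) = l)).card = n} with hMsdef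
  have hMsne : Msize.Nonempty := ⟨_, θ₁, hθ₁K, rfl, rfl⟩
  have hMsbdd : BddAbove Msize := ⟨m, by
    rintro n ⟨θ, _, _, rfl⟩
    exact le_trans (Finset.card_filter_le _ _) (by simp)⟩
  obtain ⟨θs, hθsK, hθsL, hθscard⟩ := Nat.sSup_mem hMsne hMsbdd
  set N := sSup Msize with hNdef
  have hNmax : ∀ θ ∈ K, L θ = l →
      (Finset.univ.filter (fun j => lev (θ j) = l)).card ≤ N :=
    fun θ h hL => le_csSup hMsbdd ⟨θ, h, hL, rfl⟩
  set M : Finset (Fin m) := Finset.univ.filter (fun j => lev (θs j) = l) with hMdef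
  set F : Finset (Fin m) := Mᶜ with hFdef
  have hlevge : ∀ j, l ≤ lev (θs j) := by
    intro j
    rw [← hθsL, hLdef]
    exact Finset.inf'_le _ (Finset.mem_univ j)
  have hopen : ∀ j, θs j ∈ Set.Ioo (0:ℝ) 1 := fun j =>
    lev_pos (lt_of_lt_of_le hlpos (hlevge j))
  have hMne : M.Nonempty := by
    obtain ⟨j₀, _, hj₀⟩ := Finset.exists_mem_eq_inf' hne (fun j => lev (θs j))
    refine ⟨j₀, Finset.mem_filter.2 ⟨Finset.mem_univ _, ?_⟩⟩
    rw [← hj₀]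
    exact hθsL
  have hMval' : ∀ j ∈ M, lev (θs j) = l := fun j hj => (Finset.mem_filter.1 hj).2
  have hFgt : ∀ j ∈ F, l < lev (θs j) := by
    intro j hj
    have hjM : j ∉ M := Finset.mem_compl.1 hj
    rcases lt_or_eq_of_le (hlevge j) with h | h
    · exact h
    · exact absurd (show j ∈ M from Finset.mem_filter.2 ⟨Finset.mem_univ j, h.symm⟩) hjM
  set ε : Fin m → ℝ := fun j => if θs j ≤ 1/2 then (1:ℝ) else -1 with hεdef
  have hεpm : ∀ j, ε j = 1 ∨ ε j = -1 := by
    intro j; rw [hεdef]; dsimp only; split <;> simp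
  rcases eq_or_lt_of_le hlhalf with hhalf | hlt
  · -- Case A : l = 1/2, all coordinates at 1/2
    have hall : ∀ j, θs j = 1/2 := by
      intro j
      exact lev_eq_half (le_antisymm (lev_le_half _) (hhalf ▸ hlevge j))
    have hex : ∃ ε' : Fin m → ℝ, (∀ j, ε' j = 1 ∨ ε' j = -1) ∧ ∑ j, ε' j • g j ≠ 0 := by
      by_contra hcon
      push_neg at hcon
      have hz1 : ∑ j, (1:ℝ) • g j = 0 := hcon (fun _ => 1) (fun _ => Or.inl rfl)
      have hgk : ∀ k, g k = 0 := by
        intro k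
        have hz2 := hcon (fun j => if j = k then (-1:ℝ) else 1)
          (fun j => by split <;> simp)
        have herase : ∑ j ∈ Finset.univ.erase k, (if j = k then (-1:ℝ) else 1) • g j
            = ∑ j ∈ Finset.univ.erase k, (1:ℝ) • g j :=
          Finset.sum_congr rfl (fun j hj => by rw [if_neg (Finset.ne_of_mem_erase hj)])
        have he : ∑ j, (if j = k then (-1:ℝ) else 1) • g j
            = (∑ j, (1:ℝ) • g j) - (2:ℝ) • g k := by
          rw [← Finset.add_sum_erase _ (fun j => (if j = k then (-1:ℝ) else 1) • g j)
              (Finset.mem_univ k),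
            ← Finset.add_sum_erase _ (fun j => (1:ℝ) • g j) (Finset.mem_univ k),
            herase]
          rw [if_pos rfl]
          module
        rw [hz1, hz2] at he
        have h2 := he.symm
        rw [zero_sub, neg_eq_zero] at h2
        have h3 := smul_eq_zero.1 h2
        rcases h3 with h | h
        · norm_num at h
        · exact h
      have hsub : Set.range g ⊆ ((⊥ : Submodule ℝ (Fin d → ℝ)) : Set (Fin d → ℝ)) := by
        rintro x ⟨k, rfl⟩; simp [hgk k]
      have hle : Submodule.span ℝ (Set.range g) ≤ ⊥ := Submodule.span_le.2 hsub
      rw [hspan] at hle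
      have h2 : (Pi.single (⟨0, hd⟩ : Fin d) (1:ℝ)) ∈ (⊤ : Submodule ℝ (Fin d → ℝ)) :=
        Submodule.mem_top
      have h3 := hle h2
      rw [Submodule.mem_bot] at h3
      have := congrFun h3 ⟨0, hd⟩
      simp [Pi.single_apply] at this
    obtain ⟨ε', hε'pm, hε'nz⟩ := hex
    have hstart : (∑ j ∈ (∅ : Finset (Fin m))ᶜ, ε' j • g j) ∉
        Submodule.span ℝ (g '' ↑(∅ : Finset (Fin m))) := by
      rw [Finset.coe_empty, Set.image_empty, Submodule.span_empty, Submodule.mem_bot,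
        Finset.compl_empty]
      exact hε'nz
    obtain ⟨S, _, hScard, hSind, hSw⟩ := pad g ε' hspan (d-1) ∅ (by simp)
      (linearIndependent_empty_type) hstart
    refine ⟨S, ε', θs, 1/2, hScard, hε'pm, hopen, by norm_num, ?_, hθsK.2, hSind, hSw⟩
    intro j _
    rcases hε'pm j with h | h <;> rw [h, hall j] <;> ring
  · -- Case B : l < 1/2
    have hMval : ∀ j ∈ M, θs j = (1 - ε j)/2 + ε j * l := by
      intro j hj
      rcases lev_vals (hMval' j hj) with h | h
      · have hle : θs j ≤ 1/2 := by rw [h]; linarith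
        rw [hεdef]; dsimp only; rw [if_pos hle, h]; ring
      · have hle : ¬ θs j ≤ 1/2 := by rw [h]; push_neg; linarith
        rw [hεdef]; dsimp only; rw [if_neg hle, h]; ring
    -- L1 : the tied direction is not in the span of the free generators
    have hL1 : (∑ j ∈ M, ε j • g j) ∉ Submodule.span ℝ (g '' ↑F) := by
      intro hmem
      rw [Set.image_eq_range, Submodule.mem_span_range_iff_exists_fun] at hmem
      obtain ⟨aa, haa⟩ := hmem
      set a' : Fin m → ℝ := fun j => if h : j ∈ F then aa ⟨j, h⟩ else 0 with ha'def
      have hsumF : ∑ j ∈ F, a' j • g j = ∑ j ∈ M, ε j • g j := by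
        rw [← haa, ← Finset.sum_attach F (fun j => a' j • g j), Finset.univ_eq_attach]
        apply Finset.sum_congr rfl
        intro x _
        rw [ha'def]; dsimp only; rw [dif_pos x.2, Subtype.coe_eta]
      set dd : Fin m → ℝ := fun j => if j ∈ M then ε j else -(a' j) with hdddef
      have hdd0 : ∑ j, dd j • g j = 0 := by
        rw [← Finset.sum_add_sum_compl M (fun j => dd j • g j)]
        have h1 : ∑ j ∈ M, dd j • g j = ∑ j ∈ M, ε j • g j :=
          Finset.sum_congr rfl (fun j hj => by rw [hdddef]; dsimp only; rw [if_pos hj])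
        have h2 : ∑ j ∈ Mᶜ, dd j • g j = -∑ j ∈ F, a' j • g j := by
          rw [← Finset.sum_neg_distrib]
          apply Finset.sum_congr rfl
          intro j hj
          rw [hdddef]; dsimp only; rw [if_neg (Finset.mem_compl.1 hj), neg_smul]
        rw [h1, h2, hsumF]; abel
      set hb : Fin m → ℝ := fun j => if j ∈ M then 1/2 - l else (lev (θs j) - l)/(|dd j| + 1)
        with hhbdef
      have hhbpos : ∀ j, 0 < hb j := by
        intro j
        rw [hhbdef]; dsimp only
        split
        · linarith
        · next hjM =>
          apply div_pos
          · linarith [hFgt j (Finset.mem_compl.2 hjM)]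
          · positivity
      have hinfpos : 0 < Finset.univ.inf' hne hb := (Finset.lt_inf'_iff hne).2 fun j _ => hhbpos j
      set tt : ℝ := (Finset.univ.inf' hne hb)/2 with httdef
      have httpos : 0 < tt := half_pos hinfpos
      have httlt : ∀ j, tt < hb j := fun j =>
        lt_of_lt_of_le (half_lt_self hinfpos) (Finset.inf'_le _ (Finset.mem_univ j))
      set th : Fin m → ℝ := fun j => θs j + tt * dd j with hthdef
      have hkey : ∀ j, l < lev (th j) := by
        intro j
        by_cases hj : j ∈ M
        · have hddj : dd j = ε j := by rw [hdddef]; dsimp only; rw [if_pos hj]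
          have htjh : tt < 1/2 - l := by
            have := httlt j; rw [hhbdef] at this; dsimp only at this; rwa [if_pos hj] at this
          rcases lev_vals (hMval' j hj) with h1 | h1
          · have hεj : ε j = 1 := by
              rw [hεdef]; dsimp only; rw [if_pos (by rw [h1]; linarith)]
            have hth : th j = l + tt := by
              rw [hthdef]; dsimp only; rw [hddj, hεj, h1]; ring
            rw [hth]; unfold lev; apply lt_min <;> linarith
          · have hεj : ε j = -1 := by
              rw [hεdef]; dsimp only; rw [if_neg (by rw [h1]; push_neg; linarith)]
            have hth : th j = 1 - l - tt := by
              rw [hthdef]; dsimp only; rw [hddj, hεj, h1]; ring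
            rw [hth]; unfold lev; apply lt_min <;> linarith
        · have hlip := lev_lip (x := θs j) (y := th j)
          have habs : |th j - θs j| = tt * |dd j| := by
            rw [hthdef]; dsimp only; rw [add_sub_cancel_left, abs_mul, abs_of_pos httpos]
          have htb : tt * (|dd j| + 1) < lev (θs j) - l := by
            have h5 := httlt j
            rw [hhbdef] at h5; dsimp only at h5; rw [if_neg hj] at h5
            exact (lt_div_iff₀ (by positivity)).1 h5
          nlinarith [abs_nonneg (dd j)]
      have hthK : th ∈ K := by
        constructor
        · intro j
          have h6 := lev_pos (lt_trans hlpos (hkey j))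
          exact ⟨h6.1.le, h6.2.le⟩
        · have h7 : ∑ j, th j • g j = (∑ j, θs j • g j) + tt • ∑ j, dd j • g j := by
            rw [Finset.smul_sum, ← Finset.sum_add_distrib]
            apply Finset.sum_congr rfl
            intro j _
            rw [hthdef]; dsimp only; rw [add_smul, smul_smul]
          rw [h7, hdd0, smul_zero, add_zero, hθsK.2]
      have h8 : L th ≤ l := hmax hthK
      have h9 : l < L th := (Finset.lt_inf'_iff hne).2 fun j _ => hkey j
      linarith
    -- L2 : linear independence of the free generators
    have hL2 : LinearIndependent ℝ (fun j : F => g j) := by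
      by_contra hni
      obtain ⟨aa, hsum0, k₀, hk₀⟩ := Fintype.not_linearIndependent_iff.1 hni
      have hkF : (k₀ : Fin m) ∈ F := k₀.2
      set k : Fin m := ↑k₀ with hkdef
      set a' : Fin m → ℝ := fun j => if h : j ∈ F then aa ⟨j, h⟩ else 0 with ha'def
      have ha'k : a' k ≠ 0 := by
        rw [ha'def]; dsimp only; rw [dif_pos hkF]
        have hsub : (⟨k, hkF⟩ : { x // x ∈ F }) = k₀ := Subtype.ext rfl
        rw [hsub]
        exact hk₀
      have hsumF : ∑ j ∈ F, a' j • g j = 0 := by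
        rw [← hsum0, ← Finset.sum_attach F (fun j => a' j • g j), Finset.univ_eq_attach]
        apply Finset.sum_congr rfl
        intro x _
        rw [ha'def]; dsimp only; rw [dif_pos x.2, Subtype.coe_eta]
      set a2 : Fin m → ℝ := if 0 < a' k then a' else fun j => -(a' j) with ha2def
      have ha2k : 0 < a2 k := by
        rw [ha2def]
        split
        · assumption
        · next hnp =>
          push_neg at hnp
          dsimp only
          rcases lt_or_eq_of_le hnp with h | h
          · linarith
          · exact absurd h ha'k
      have ha2supp : ∀ j, j ∉ F → a2 j = 0 := by
        intro j hj
        have : a' j = 0 := by rw [ha'def]; dsimp only; rw [dif_neg hj]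
        rw [ha2def]; split <;> simp [this]
      have ha2sumU : ∑ j, a2 j • g j = 0 := by
        rw [← Finset.sum_add_sum_compl F (fun j => a2 j • g j)]
        have h2 : ∑ j ∈ Fᶜ, a2 j • g j = 0 := Finset.sum_eq_zero (fun j hj => by
          rw [ha2supp j (Finset.mem_compl.1 hj), zero_smul])
        have h3 : ∑ j ∈ F, a2 j • g j = 0 := by
          rw [ha2def]
          split
          · exact hsumF
          · dsimp only
            have hneg : ∑ j ∈ F, -a' j • g j = -∑ j ∈ F, a' j • g j := by
              rw [← Finset.sum_neg_distrib]
              exact Finset.sum_congr rfl fun j _ => neg_smul _ _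
            rw [hneg, hsumF, neg_zero]
        rw [h2, h3, add_zero]
      have hFne : F.Nonempty := ⟨k, hkF⟩
      set f : ℝ → ℝ := fun t => F.inf' hFne (fun j => lev (θs j + t * a2 j)) with hfdef
      have hfcont : Continuous f := by
        rw [hfdef]
        apply Continuous.finset_inf'_apply hFne
        intro j _
        have hc : Continuous (fun t : ℝ => θs j + t * a2 j) :=
          continuous_const.add (continuous_id.mul continuous_const)
        exact hc.min (continuous_const.sub hc)
      have hf0 : l < f 0 := by
        rw [hfdef]
        exact (Finset.lt_inf'_iff hFne).2 fun j hj => by simpa using hFgt j hj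
      set t1 : ℝ := 2 / a2 k with ht1def
      have ht1pos : 0 < t1 := div_pos two_pos ha2k
      have hft1 : f t1 < l := by
        have h1 : f t1 ≤ lev (θs k + t1 * a2 k) := Finset.inf'_le _ hkF
        have h2 : t1 * a2 k = 2 := div_mul_cancel₀ 2 (ne_of_gt ha2k)
        rw [h2] at h1
        have h3 : lev (θs k + 2) ≤ 1 - (θs k + 2) := min_le_right _ _
        have h4 := (hopen k).1
        linarith
      have hIcc : l ∈ Set.Icc (f t1) (f 0) := ⟨hft1.le, hf0.le⟩
      obtain ⟨t', _, hft'⟩ := intermediate_value_Icc' ht1pos.le hfcont.continuousOn hIcc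
      set th : Fin m → ℝ := fun j => θs j + t' * a2 j with hthdef
      have hthM : ∀ j, j ∉ F → th j = θs j := fun j hj => by
        rw [hthdef]; dsimp only; rw [ha2supp j hj, mul_zero, add_zero]
      have hthF : ∀ j ∈ F, l ≤ lev (th j) := by
        intro j hj
        rw [← hft']
        exact Finset.inf'_le _ hj
      have hthall : ∀ j, l ≤ lev (th j) := by
        intro j
        by_cases hj : j ∈ F
        · exact hthF j hj
        · rw [hthM j hj]; exact hlevge j
      have hthK : th ∈ K := by
        constructor
        · intro j
          have h6 := lev_pos (lt_of_lt_of_le hlpos (hthall j))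
          exact ⟨h6.1.le, h6.2.le⟩
        · have h7 : ∑ j, th j • g j = (∑ j, θs j • g j) + t' • ∑ j, a2 j • g j := by
            rw [Finset.smul_sum, ← Finset.sum_add_distrib]
            apply Finset.sum_congr rfl
            intro j _
            rw [hthdef]; dsimp only; rw [add_smul, smul_smul]
          rw [h7, ha2sumU, smul_zero, add_zero, hθsK.2]
      have hthL : L th = l := by
        apply le_antisymm
        · obtain ⟨j₀, hj₀M⟩ := hMne
          have h5 : L th ≤ lev (th j₀) := Finset.inf'_le _ (Finset.mem_univ j₀)
          have hj₀F : j₀ ∉ F := fun hc => (Finset.mem_compl.1 hc) hj₀M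
          rw [hthM j₀ hj₀F, hMval' j₀ hj₀M] at h5
          exact h5
        · exact Finset.le_inf' hne _ (fun j _ => hthall j)
      obtain ⟨j', hj'F, hj'⟩ := Finset.exists_mem_eq_inf' hFne (fun j => lev (θs j + t' * a2 j))
      have hj'lev : lev (th j') = l := by
        rw [hthdef]; dsimp only; rw [← hj']; exact hft'
      have hj'M : j' ∉ M := Finset.mem_compl.1 hj'F
      have hsub : insert j' M ⊆ Finset.univ.filter (fun j => lev (th j) = l) := by
        intro x hx
        rcases Finset.mem_insert.1 hx with rfl | hxM
        · exact Finset.mem_filter.2 ⟨Finset.mem_univ _, hj'lev⟩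
        · refine Finset.mem_filter.2 ⟨Finset.mem_univ _, ?_⟩
          rw [hthM x (fun hc => (Finset.mem_compl.1 hc) hxM)]
          exact hMval' x hxM
      have hcard1 : N + 1 ≤ (Finset.univ.filter (fun j => lev (th j) = l)).card := by
        calc N + 1 = (insert j' M).card := by
              rw [Finset.card_insert_of_notMem hj'M, hθscard]
        _ ≤ _ := Finset.card_le_card hsub
      have := hNmax th hthK hthL
      omega
    -- cardinality bound
    have hrange : Set.range (fun j : F => g j) = g '' ↑F := by
      ext x
      constructor
      · rintro ⟨j, rfl⟩; exact ⟨j, j.2, rfl⟩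
      · rintro ⟨y, hy, rfl⟩; exact ⟨⟨y, hy⟩, rfl⟩
    have hjoint := hL2.option (x := ∑ j ∈ M, ε j • g j)
      (by rw [hrange]; exact hL1)
    have hcardF : F.card + 1 ≤ d := by
      have h1 := hjoint.fintype_card_le_finrank
      rw [Fintype.card_option, Fintype.card_coe] at h1
      have h2 : Module.finrank ℝ (Fin d → ℝ) = d := by simp [Module.finrank_pi]
      omega
    have hFcM : Fᶜ = M := by rw [hFdef, compl_compl]
    obtain ⟨S, hFS, hScard, hSind, hSw⟩ := pad g ε hspan (d - 1 - F.card) F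
      (by omega) hL2 (by rw [hFcM]; exact hL1)
    refine ⟨S, ε, θs, l, hScard, hεpm, hopen, ⟨hlpos, by linarith⟩, ?_, hθsK.2, hSind, hSw⟩
    intro j hjS
    have hjF : j ∉ F := fun hc => hjS (hFS hc)
    have hjM : j ∈ M := by
      by_contra hc
      exact hjF (Finset.mem_compl.2 hc)
    exact hMval j hjM

lemma interior_rep {d m : ℕ} (g : Fin m → Fin d → ℝ) (Z : Set (Fin d → ℝ))
    (hZ : Z = ∑ j : Fin m, segment ℝ (0 : Fin d → ℝ) (g j))
    (v : Fin d → ℝ) (hv : v ∈ interior Z)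
    (hspan : Submodule.span ℝ (Set.range g) = ⊤) :
    ∃ θ₀ : Fin m → ℝ, (∀ j, θ₀ j ∈ Set.Ioo (0:ℝ) 1) ∧ ∑ j, θ₀ j • g j = v := by
  classical
  set Glin : (Fin m → ℝ) →ₗ[ℝ] (Fin d → ℝ) :=
    { toFun := fun θ => ∑ j, θ j • g j
      map_add' := fun x y => by
        simp only [Pi.add_apply, add_smul]
        rw [Finset.sum_add_distrib]
      map_smul' := fun c x => by
        simp only [Pi.smul_apply, smul_eq_mul, RingHom.id_apply]
        rw [Finset.smul_sum]
        exact Finset.sum_congr rfl fun j _ => by rw [smul_smul] } with hGdef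
  have hGapp : ∀ θ, Glin θ = ∑ j, θ j • g j := fun θ => rfl
  have hsurj : Function.Surjective Glin := by
    intro x
    have hx : x ∈ Submodule.span ℝ (Set.range g) := hspan ▸ Submodule.mem_top
    obtain ⟨c, hc⟩ := (Submodule.mem_span_range_iff_exists_fun ℝ).1 hx
    exact ⟨c, hc⟩
  have hcont : Continuous Glin := Glin.continuous_of_finiteDimensional
  have hopenmap : IsOpenMap Glin := by
    have := ContinuousLinearMap.isOpenMap (LinearMap.toContinuousLinearMap Glin) hsurj
    exact this
  set box : Set (Fin m → ℝ) := Set.pi Set.univ (fun _ : Fin m => Set.Icc (0:ℝ) 1) with hboxdef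
  set obox : Set (Fin m → ℝ) := Set.pi Set.univ (fun _ : Fin m => Set.Ioo (0:ℝ) 1) with hoboxdef
  set U : Set (Fin d → ℝ) := Glin '' obox with hUdef
  have hUopen : IsOpen U := hopenmap _ (isOpen_set_pi Set.finite_univ (fun i _ => isOpen_Ioo))
  have hUconv : Convex ℝ U :=
    Convex.linear_image (convex_pi (fun i _ => convex_Ioo 0 1)) Glin
  have hZchar : Z = Glin '' box := by
    rw [hZ]
    ext x
    rw [mem_sum_seg]
    constructor
    · rintro ⟨θ, hθ, rfl⟩
      exact ⟨θ, fun j _ => hθ j (Finset.mem_univ j), rfl⟩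
    · rintro ⟨θ, hθ, rfl⟩
      exact ⟨θ, fun j _ => hθ j (Set.mem_univ j), rfl⟩
  have hclosbox : box = closure obox := by
    rw [hboxdef, hoboxdef, closure_pi_set]
    exact Set.pi_congr rfl fun i _ => (closure_Ioo (by norm_num : (0:ℝ) ≠ 1)).symm
  have hZclos : Z ⊆ closure U := by
    rw [hZchar, hclosbox]
    exact (image_closure_subset_closure_image hcont)
  -- the point y
  set y : Fin d → ℝ := Glin (fun _ => 1/2) with hydef
  have hyU : y ∈ U := ⟨fun _ => 1/2, fun j _ => by norm_num, rfl⟩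
  have hvU : v ∈ U := by
    by_cases hvy : v = y
    · rw [hvy]; exact hyU
    · obtain ⟨r, hr, hball⟩ : ∃ r > 0, Metric.ball v r ⊆ Z := by
        rw [mem_interior_iff_mem_nhds] at hv
        exact Metric.mem_nhds_iff.1 hv
      have hnorm : 0 < ‖v - y‖ := by
        rw [norm_pos_iff]
        exact sub_ne_zero.2 hvy
      set s : ℝ := r / (2 * ‖v - y‖) with hsdef
      have hspos : 0 < s := div_pos hr (by positivity)
      set v' : Fin d → ℝ := v + s • (v - y) with hv'def
      have hv'ball : v' ∈ Metric.ball v r := by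
        rw [Metric.mem_ball, dist_eq_norm]
        have : v' - v = s • (v - y) := by rw [hv'def]; abel
        have heq : s * ‖v - y‖ = r / 2 := by
          rw [hsdef]
          field_simp
        rw [this, norm_smul, Real.norm_eq_abs, abs_of_pos hspos, heq]
        linarith
      have hv'cl : v' ∈ closure U := hZclos (hball hv'ball)
      have hs1 : (1:ℝ) + s ≠ 0 := by positivity
      have hab : (s/(1+s)) + (1/(1+s)) = 1 := by
        rw [← add_div, add_comm s 1, div_self hs1]
      have hcomb : (s/(1+s)) • y + (1/(1+s)) • v' = v := by
        rw [hv'def]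
        match_scalars <;> field_simp <;> ring
      have := hUconv.combo_interior_closure_mem_interior
        (by rw [hUopen.interior_eq]; exact hyU) hv'cl
        (div_pos hspos (by positivity)) (by positivity) hab
      rw [hcomb, hUopen.interior_eq] at this
      exact this
  obtain ⟨θ₀, hθ₀o, hθ₀⟩ := hvU
  exact ⟨θ₀, fun j => hθ₀o j (Set.mem_univ j), hθ₀⟩

lemma lattice_sum {d : ℕ} {ι : Type*} (s : Finset ι) (f : ι → Fin d → ℝ)
    (hf : ∀ j ∈ s, IsLatticePoint (f j)) : IsLatticePoint (∑ j ∈ s, f j) := by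
  classical
  intro i
  rw [Finset.sum_apply]
  have h : ∀ j : ι, ∃ z : ℤ, j ∈ s → f j i = (z : ℝ) := by
    intro j
    by_cases hj : j ∈ s
    · obtain ⟨z, hz⟩ := hf j hj i
      exact ⟨z, fun _ => hz⟩
    · exact ⟨0, fun h => absurd h hj⟩
  choose z hz using h
  refine ⟨∑ j ∈ s, z j, ?_⟩
  push_cast
  exact Finset.sum_congr rfl fun j hj => hz j hj


lemma vadd_add_assoc' {E : Type*} [AddCommGroup E] (z : E) (A B : Set E) :
    (z +ᵥ A) + B = z +ᵥ (A + B) := by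
  ext x
  constructor
  · rintro ⟨a, ⟨a', ha', rfl⟩, b, hb, rfl⟩
    exact ⟨a' + b, ⟨a', ha', b, hb, rfl⟩, by simp [vadd_eq_add]; abel⟩
  · rintro ⟨y, ⟨a', ha', b, hb, rfl⟩, rfl⟩
    exact ⟨z + a', ⟨a', ha', rfl⟩, b, hb, by simp [vadd_eq_add]; abel⟩


theorem zonotopal_steinitz
    {d m : ℕ} (g : Fin m → Fin d → ℝ)
    (Z : Set (Fin d → ℝ))
    (hZ : Z = ∑ j : Fin m, segment ℝ (0 : Fin d → ℝ) (g j))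
    (c : Fin d → ℝ) (hc : c = (2 : ℝ)⁻¹ • ∑ j : Fin m, g j)
    (v : Fin d → ℝ) (hv : v ∈ interior Z) :
    ∃ (S : Finset (Fin m)) (t : Fin d → ℝ) (Q P : Set (Fin d → ℝ)),
      S.card = d - 1 ∧
      LinearIndependent ℝ (fun j : S => g j) ∧
      Q = t +ᵥ ∑ j ∈ S, segment ℝ (0 : Fin d → ℝ) (g j) ∧
      P = convexHull ℝ (Q ∪ (({(2 : ℝ) • c} : Set (Fin d → ℝ)) - Q)) ∧
      v ∈ interior P ∧ P ⊆ Z ∧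
      ((∀ j, IsLatticePoint (g j)) →
        ∃ (u : Fin d → ℝ) (b : Fin d → Fin d → ℝ),
          IsLatticePoint u ∧ (∀ j, IsLatticePoint (b j)) ∧
          LinearIndependent ℝ b ∧
          P = u +ᵥ ∑ j : Fin d, segment ℝ (0 : Fin d → ℝ) (b j)) := by
  classical
  rcases Nat.eq_zero_or_pos d with hd0 | hd
  · -- degenerate case d = 0
    subst hd0
    haveI hss : Subsingleton (Fin 0 → ℝ) := ⟨fun a b => funext fun i => i.elim0⟩
    have huniv : ∀ A : Set (Fin 0 → ℝ), A.Nonempty → A = Set.univ := by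
      rintro A ⟨a, ha⟩
      exact Set.eq_univ_of_forall fun x => (Subsingleton.elim x a) ▸ ha
    set Q0 : Set (Fin 0 → ℝ) :=
      (0 : Fin 0 → ℝ) +ᵥ ∑ j ∈ (∅ : Finset (Fin m)), segment ℝ (0 : Fin 0 → ℝ) (g j) with hQ0
    set P0 : Set (Fin 0 → ℝ) :=
      convexHull ℝ (Q0 ∪ (({(2 : ℝ) • c} : Set (Fin 0 → ℝ)) - Q0)) with hP0
    have hQ0mem : (0 : Fin 0 → ℝ) ∈ Q0 := by
      rw [hQ0]
      refine ⟨0, ?_, by simp⟩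
      rw [mem_sum_seg]
      exact ⟨0, by simp, by simp⟩
    have hP0ne : P0.Nonempty := ⟨0, subset_convexHull _ _ (Or.inl hQ0mem)⟩
    have hP0u : P0 = Set.univ := huniv _ hP0ne
    have hZu : Z = Set.univ := huniv _ ⟨v, interior_subset hv⟩
    refine ⟨∅, 0, Q0, P0, by simp, ?_, rfl, rfl, ?_, ?_, ?_⟩
    · haveI : IsEmpty ((∅ : Finset (Fin m)) : Type) := by
        constructor; rintro ⟨x, hx⟩; exact absurd hx (Finset.notMem_empty x)
      exact linearIndependent_empty_type
    · rw [hP0u]; simp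
    · rw [hP0u, hZu]
    · intro _
      refine ⟨0, fun _ => 0, fun i => i.elim0, fun j i => i.elim0, linearIndependent_empty_type, ?_⟩
      rw [hP0u]
      refine (huniv _ ⟨0, ?_⟩).symm
      refine ⟨0, ?_, by simp⟩
      rw [mem_sum_seg]
      exact ⟨0, by simp, by simp⟩
  · -- main case
    have hZsub : Z ⊆ (Submodule.span ℝ (Set.range g) : Set (Fin d → ℝ)) := by
      intro x hx
      rw [hZ, mem_sum_seg] at hx
      obtain ⟨θ, _, rfl⟩ := hx
      exact Submodule.sum_mem _ fun j _ =>
        Submodule.smul_mem _ _ (Submodule.subset_span ⟨j, rfl⟩)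
    have hspan : Submodule.span ℝ (Set.range g) = ⊤ :=
      Submodule.eq_top_of_nonempty_interior' _ ⟨v, interior_mono hZsub hv⟩
    obtain ⟨S, ε, θ, μ, hScard, hεpm, hθo, hμo, htied, hsum, hSind, hSw⟩ :=
      core g v hd hspan (interior_rep g Z hZ v hv hspan)
    set w : Fin d → ℝ := ∑ j ∈ Sᶜ, ε j • g j with hwdef
    set t : Fin d → ℝ := ∑ j ∈ Sᶜ.filter (fun j => ε j = -1), g j with htdef
    set PiS : Set (Fin d → ℝ) := ∑ j ∈ S, segment ℝ (0 : Fin d → ℝ) (g j) with hPiSdef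
    set Q : Set (Fin d → ℝ) := t +ᵥ PiS with hQdef
    set svec : Fin d → ℝ := ∑ j ∈ S, g j with hsvecdef
    -- the center identity
    have h2c : (2 : ℝ) • c = svec + ((2:ℝ) • t + w) := by
      have hA : (2 : ℝ) • c = ∑ j, g j := by
        rw [hc, smul_smul]; norm_num
      have h1 : (2:ℝ) • t = ∑ j ∈ Sᶜ, (if ε j = -1 then (2:ℝ) else 0) • g j := by
        rw [htdef, Finset.smul_sum, Finset.sum_filter]
        apply Finset.sum_congr rfl
        intro j _
        split <;> simp
      have h2 : (2:ℝ) • t + w = ∑ j ∈ Sᶜ, g j := by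
        rw [h1, hwdef, ← Finset.sum_add_distrib]
        apply Finset.sum_congr rfl
        intro j _
        rcases hεpm j with h | h <;> rw [h, ← add_smul] <;> norm_num
      rw [hA, h2, hsvecdef, Finset.sum_add_sum_compl]
    -- symmetry of the small box
    have hsym : ∀ x ∈ PiS, svec - x ∈ PiS := by
      intro x hx
      rw [hPiSdef, mem_sum_seg] at hx ⊢
      obtain ⟨lam, hlam, rfl⟩ := hx
      refine ⟨fun j => 1 - lam j, fun j hj =>
        ⟨by dsimp only; linarith [(hlam j hj).2], by dsimp only; linarith [(hlam j hj).1]⟩, ?_⟩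
      rw [hsvecdef, ← Finset.sum_sub_distrib]
      apply Finset.sum_congr rfl
      intro j _
      rw [sub_smul, one_smul]
    -- the reflected copy
    have hQshift : (({(2 : ℝ) • c} : Set (Fin d → ℝ)) - Q) = (w + t) +ᵥ PiS := by
      ext x
      rw [Set.mem_sub]
      constructor
      · rintro ⟨a, ha, bb, hb, rfl⟩
        rw [Set.mem_singleton_iff] at ha
        subst ha
        obtain ⟨y, hy, rfl⟩ := hb
        refine ⟨svec - y, hsym y hy, ?_⟩
        show (w + t) + (svec - y) = (2:ℝ) • c - (t + y)
        rw [h2c]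
        module
      · rintro ⟨z, hz, rfl⟩
        refine ⟨(2:ℝ) • c, Set.mem_singleton _, t + (svec - z),
          ⟨svec - z, hsym z hz, rfl⟩, ?_⟩
        show (2:ℝ) • c - (t + (svec - z)) = (w + t) + z
        rw [h2c]
        module
    have hQconv : Convex ℝ Q := (convex_sum_seg S g).vadd t
    have hPQ : convexHull ℝ (Q ∪ (({(2 : ℝ) • c} : Set (Fin d → ℝ)) - Q))
        = Q + segment ℝ (0 : Fin d → ℝ) w := by
      rw [hQshift, hQdef, ← vadd_vadd]
      exact hull_union_vadd (t +ᵥ PiS) (by rw [← hQdef]; exact hQconv) w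
    set P : Set (Fin d → ℝ) := Q + segment ℝ (0 : Fin d → ℝ) w with hPdef
    -- tied sum computation
    have htiedsum : ∀ μ' : ℝ, ∑ j ∈ Sᶜ, ((1 - ε j)/2 + ε j * μ') • g j = t + μ' • w := by
      intro μ'
      have h1 : t = ∑ j ∈ Sᶜ, (if ε j = -1 then (1:ℝ) else 0) • g j := by
        rw [htdef, Finset.sum_filter]
        apply Finset.sum_congr rfl
        intro j _
        split <;> simp
      have h2 : μ' • w = ∑ j ∈ Sᶜ, (μ' * ε j) • g j := by
        rw [hwdef, Finset.smul_sum]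
        exact Finset.sum_congr rfl fun j _ => by rw [smul_smul]
      rw [h1, h2, ← Finset.sum_add_distrib]
      apply Finset.sum_congr rfl
      intro j _
      rcases hεpm j with h | h <;> rw [h, ← add_smul] <;> norm_num
    -- the d-dimensional frame
    have hd1 : d - 1 + 1 = d := by omega
    set e : Fin (d-1) ≃ {x // x ∈ S} := (finCongr hScard.symm).trans S.equivFin.symm with hedef
    set b0 : Fin (d-1) → Fin d → ℝ := fun i => g (e i) with hb0def
    set bsn : Fin (d-1+1) → Fin d → ℝ := Fin.snoc b0 w with hbsndef
    set b : Fin d → Fin d → ℝ := fun i => bsn (Fin.cast hd1.symm i) with hbdef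
    have hrangeb0 : Set.range b0 = g '' ↑S := by
      ext x
      constructor
      · rintro ⟨i, rfl⟩
        exact ⟨e i, (e i).2, rfl⟩
      · rintro ⟨y, hy, rfl⟩
        exact ⟨e.symm ⟨y, hy⟩, by rw [hb0def]; simp⟩
    have hbsnind : LinearIndependent ℝ bsn := by
      rw [hbsndef]
      refine linearIndependent_fin_snoc.2 ⟨?_, ?_⟩
      · exact hSind.comp e e.injective
      · rw [hrangeb0]; exact hSw
    have hbind : LinearIndependent ℝ b := by
      have : b = bsn ∘ (finCongr hd1.symm) := by
        funext i; rw [hbdef]; rfl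
      rw [this]
      exact hbsnind.comp _ (finCongr hd1.symm).injective
    -- sum of segments over b
    have hsumb : ∑ i : Fin d, segment ℝ (0 : Fin d → ℝ) (b i)
        = PiS + segment ℝ (0 : Fin d → ℝ) w := by
      have s1 : ∑ i : Fin d, segment ℝ (0 : Fin d → ℝ) (b i)
          = ∑ i : Fin (d-1+1), segment ℝ (0 : Fin d → ℝ) (bsn i) :=
        Fintype.sum_equiv (finCongr hd1.symm) _ _ (fun i => rfl)
      have s2 : ∑ i : Fin (d-1+1), segment ℝ (0 : Fin d → ℝ) (bsn i)
          = (∑ i : Fin (d-1), segment ℝ (0 : Fin d → ℝ) (b0 i))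
            + segment ℝ (0 : Fin d → ℝ) w := by
        rw [Fin.sum_univ_castSucc]
        congr 1
        · apply Finset.sum_congr rfl
          intro i _
          rw [hbsndef, Fin.snoc_castSucc]
        · rw [hbsndef, Fin.snoc_last]
      have s3 : ∑ i : Fin (d-1), segment ℝ (0 : Fin d → ℝ) (b0 i) = PiS := by
        rw [hPiSdef, ← Finset.sum_coe_sort S (fun j => segment ℝ (0 : Fin d → ℝ) (g j))]
        exact Equiv.sum_comp e (fun j : {x // x ∈ S} => segment ℝ (0 : Fin d → ℝ) (g j))
      rw [s1, s2, s3]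
    have hPpar : P = t +ᵥ ∑ i : Fin d, segment ℝ (0 : Fin d → ℝ) (b i) := by
      rw [hsumb, hPdef, hQdef, vadd_add_assoc']
    -- the linear frame map
    set Blin : (Fin d → ℝ) →ₗ[ℝ] (Fin d → ℝ) :=
      { toFun := fun lam => ∑ i, lam i • b i
        map_add' := fun x y => by
          simp only [Pi.add_apply, add_smul]
          rw [Finset.sum_add_distrib]
        map_smul' := fun r x => by
          simp only [Pi.smul_apply, smul_eq_mul, RingHom.id_apply]
          rw [Finset.smul_sum]
          exact Finset.sum_congr rfl fun j _ => by rw [smul_smul] } with hBdef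
    have hBinj : Function.Injective Blin := by
      rw [← LinearMap.ker_eq_bot, Submodule.eq_bot_iff]
      intro x hx
      have hx' : ∑ i, x i • b i = 0 := hx
      have := Fintype.linearIndependent_iff.1 hbind x hx'
      funext i
      exact this i
    have hBsurj : Function.Surjective Blin := LinearMap.injective_iff_surjective.1 hBinj
    have hBopen : IsOpenMap Blin := by
      have := ContinuousLinearMap.isOpenMap (LinearMap.toContinuousLinearMap Blin) hBsurj
      exact this
    -- the coefficient vector for v
    set lam0 : Fin (d-1+1) → ℝ := Fin.snoc (fun i => θ (e i)) μ with hlam0def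
    set lam : Fin d → ℝ := fun i => lam0 (Fin.cast hd1.symm i) with hlamdef
    have hlamIoo : ∀ i, lam i ∈ Set.Ioo (0:ℝ) 1 := by
      intro i
      rw [hlamdef]
      dsimp only
      induction (Fin.cast hd1.symm i) using Fin.lastCases with
      | last => rw [hlam0def, Fin.snoc_last]; exact hμo
      | cast i' => rw [hlam0def, Fin.snoc_castSucc]; exact hθo _
    have hBlam : Blin lam = (∑ j ∈ S, θ j • g j) + μ • w := by
      have s1 : Blin lam = ∑ i : Fin (d-1+1), lam0 i • bsn i := by
        exact Fintype.sum_equiv (finCongr hd1.symm) _ _ (fun i => rfl)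
      rw [s1, Fin.sum_univ_castSucc]
      congr 1
      · rw [← Finset.sum_coe_sort S (fun j => θ j • g j),
          ← Equiv.sum_comp e (fun j : {x // x ∈ S} => θ (j:Fin m) • g (j:Fin m))]
        apply Finset.sum_congr rfl
        intro i _
        rw [hlam0def, hbsndef, Fin.snoc_castSucc, Fin.snoc_castSucc, hb0def]
      · rw [hlam0def, hbsndef, Fin.snoc_last, Fin.snoc_last]
    have hv2 : v = t + ((∑ j ∈ S, θ j • g j) + μ • w) := by
      rw [← hsum, ← Finset.sum_add_sum_compl S (fun j => θ j • g j)]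
      have : ∑ j ∈ Sᶜ, θ j • g j = t + μ • w := by
        rw [← htiedsum μ]
        apply Finset.sum_congr rfl
        intro j hj
        rw [htied j (Finset.mem_compl.1 hj)]
      rw [this]
      abel
    have hvP : v ∈ interior P := by
      set obox : Set (Fin d → ℝ) := Set.pi Set.univ (fun _ : Fin d => Set.Ioo (0:ℝ) 1)
        with hoboxdef
      have hopen : IsOpen (t +ᵥ (Blin '' obox)) :=
        (hBopen _ (isOpen_set_pi Set.finite_univ (fun i _ => isOpen_Ioo))).vadd t
      have hsub : (t +ᵥ (Blin '' obox)) ⊆ P := by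
        rintro x ⟨y, ⟨z, hz, rfl⟩, rfl⟩
        rw [hPpar]
        refine ⟨∑ i, z i • b i, ?_, rfl⟩
        rw [mem_sum_seg]
        exact ⟨z, fun i _ => ⟨(hz i (Set.mem_univ i)).1.le, (hz i (Set.mem_univ i)).2.le⟩, rfl⟩
      have hvmem : v ∈ t +ᵥ (Blin '' obox) := by
        refine ⟨Blin lam, ⟨lam, fun i _ => hlamIoo i, rfl⟩, ?_⟩
        show t + Blin lam = v
        rw [hBlam]
        exact hv2.symm
      exact interior_maximal hsub hopen hvmem
    have hPZ : P ⊆ Z := by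
      rintro x ⟨q, ⟨y, hy, rfl⟩, uu, hu, rfl⟩
      obtain ⟨μ', hμ', rfl⟩ := (mem_seg_zero w uu).1 hu
      rw [hPiSdef, mem_sum_seg] at hy
      obtain ⟨lam2, hlam2, rfl⟩ := hy
      rw [hZ, mem_sum_seg]
      refine ⟨fun j => if j ∈ S then lam2 j else (1 - ε j)/2 + ε j * μ', fun j _ => ?_, ?_⟩
      · dsimp only
        by_cases hj : j ∈ S
        · rw [if_pos hj]; exact hlam2 j hj
        · rw [if_neg hj]
          rcases hεpm j with h | h <;> rw [h] <;> constructor <;>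
            [linarith [hμ'.1]; linarith [hμ'.2]; linarith [hμ'.2]; linarith [hμ'.1]]
      · rw [← Finset.sum_add_sum_compl S
          (fun j => (if j ∈ S then lam2 j else (1 - ε j)/2 + ε j * μ') • g j)]
        have e1 : ∑ j ∈ S, (if j ∈ S then lam2 j else (1 - ε j)/2 + ε j * μ') • g j
            = ∑ j ∈ S, lam2 j • g j :=
          Finset.sum_congr rfl fun j hj => by rw [if_pos hj]
        have e2 : ∑ j ∈ Sᶜ, (if j ∈ S then lam2 j else (1 - ε j)/2 + ε j * μ') • g j
            = t + μ' • w := by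
          rw [← htiedsum μ']
          exact Finset.sum_congr rfl fun j hj => by rw [if_neg (Finset.mem_compl.1 hj)]
        rw [e1, e2]
        show (t + (∑ j ∈ S, lam2 j • g j)) + μ' • w
            = (∑ j ∈ S, lam2 j • g j) + (t + μ' • w)
        abel
    refine ⟨S, t, Q, P, hScard, hSind, rfl, hPQ.symm ▸ rfl, hvP, hPZ, ?_⟩
    · intro hg
      have hlatt : IsLatticePoint t := by
        rw [htdef]
        exact lattice_sum _ _ fun j _ => hg j
      have hlatw : IsLatticePoint w := by
        rw [hwdef]
        apply lattice_sum
        intro j _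
        rcases hεpm j with h | h <;> rw [h]
        · intro i
          obtain ⟨z, hz⟩ := hg j i
          exact ⟨z, by simpa using hz⟩
        · intro i
          obtain ⟨z, hz⟩ := hg j i
          exact ⟨-z, by push_cast; simp [hz]⟩
      refine ⟨t, b, hlatt, ?_, hbind, hPpar⟩
      intro j
      rw [hbdef]
      dsimp only
      induction (Fin.cast hd1.symm j) using Fin.lastCases with
      | last => rw [hbsndef, Fin.snoc_last]; exact hlatw
      | cast i' => rw [hbsndef, Fin.snoc_castSucc, hb0def]; exact hg _
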